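/- Let R be a local ring with maximal ideal m over a field of characteristic 0, Γ a finite group acting on R by local automorphisms, Φ the averaging operator, and a the ideal generated by elements y₁,…,y_s ∈ ker Φ whose images generate the image of ker Φ in m/m². If ker Φ ⊆ a + m^r for some r ≥ 1, then ker Φ ⊆ a + m^{r+1}. -/
import Mathlib


/-- Let `R` be a local ring over a field of characteristic 0, `Γ` a finite
group acting on `R` by local automorphisms, `Φ` the averaging operator, and `a`
the ideal generated by elements `y₁, …, y_s ∈ ker Φ ∩ m` whose images generate
the image of `ker Φ` in `m/m²`.  If `ker Φ ⊆ a + m^r` for some `r ≥ 1`, then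
`ker Φ ⊆ a + m^{r+1}`. -/
theorem stmt6 {k R Γ : Type*} [Field k] [CharZero k] [CommRing R] [Algebra k R]
    [IsLocalRing R] [IsNoetherianRing R]
    [Group Γ] [Fintype Γ]
    (ρ : Γ →* (R ≃ₐ[k] R))
    (hloc : ∀ γ : Γ, ∀ x ∈ IsLocalRing.maximalIdeal R,
      ρ γ x ∈ IsLocalRing.maximalIdeal R)
    (Φ : R → R)
    (hΦ : ∀ x : R, Φ x = (Fintype.card Γ : k)⁻¹ • ∑ γ : Γ, ρ γ x)
    (s : ℕ) (y : Fin s → R)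
    (hyker : ∀ i, Φ (y i) = 0)
    (hym : ∀ i, y i ∈ IsLocalRing.maximalIdeal R)
    -- the images of the `y i` generate the image of `ker Φ` in `m/m²`
    (hgen : ∀ x : R, Φ x = 0 → x ∈ IsLocalRing.maximalIdeal R →
      ∃ c : Fin s → R, x - ∑ i, c i * y i ∈ (IsLocalRing.maximalIdeal R) ^ 2)
    (a : Ideal R) (ha : a = Ideal.span (Set.range y))
    (r : ℕ) (hr : 1 ≤ r)
    (hsub : {x : R | Φ x = 0} ⊆ ↑(a + (IsLocalRing.maximalIdeal R) ^ r)) :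
    {x : R | Φ x = 0} ⊆ ↑(a + (IsLocalRing.maximalIdeal R) ^ (r + 1)) := by
  obtain ⟨r', rfl⟩ : ∃ r', r = r' + 1 := ⟨r - 1, by omega⟩
  set m := IsLocalRing.maximalIdeal R with hm
  set n : k := (Fintype.card Γ : k) with hn
  have hn0 : n ≠ 0 := Nat.cast_ne_zero.mpr Fintype.card_ne_zero
  -- basic properties of Φ
  have hΦadd : ∀ u v : R, Φ (u + v) = Φ u + Φ v := by
    intro u v
    simp only [hΦ]
    rw [← smul_add, ← Finset.sum_add_distrib]
    simp [map_add]
  have hΦsub : ∀ u v : R, Φ (u - v) = Φ u - Φ v := by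
    intro u v
    simp only [hΦ]
    rw [← smul_sub, ← Finset.sum_sub_distrib]
    simp [map_sub]
  have hΦsum : ∀ f : Fin s → R, Φ (∑ i, f i) = ∑ i, Φ (f i) := by
    intro f
    simp only [hΦ, map_sum]
    rw [Finset.sum_comm, Finset.smul_sum]
  have hinv : ∀ (δ : Γ) (x : R), ρ δ (Φ x) = Φ x := by
    intro δ x
    simp only [hΦ, map_smul, map_sum]
    congr 1
    exact Fintype.sum_equiv (Equiv.mulLeft δ) _ _ (fun γ => by simp [map_mul])
  have hΦγ : ∀ (δ : Γ) (x : R), Φ (ρ δ x) = Φ x := by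
    intro δ x
    simp only [hΦ]
    congr 1
    exact Fintype.sum_equiv (Equiv.mulRight δ) _ _ (fun γ => by simp [map_mul])
  have hidem : ∀ x : R, Φ (Φ x) = Φ x := by
    intro x
    rw [hΦ (Φ x)]
    simp only [hinv]
    rw [Finset.sum_const, Finset.card_univ, ← Nat.cast_smul_eq_nsmul k, ← hn,
      smul_smul, inv_mul_cancel₀ hn0, one_smul]
  have hΦinvmul : ∀ t x : R, (∀ γ, ρ γ t = t) → Φ (t * x) = t * Φ x := by
    intro t x ht
    simp only [hΦ]
    have h1 : ∑ γ : Γ, ρ γ (t * x) = t * ∑ γ : Γ, ρ γ x := by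
      rw [Finset.mul_sum]
      exact Finset.sum_congr rfl fun γ _ => by rw [map_mul, ht]
    rw [h1, mul_smul_comm]
  -- kernel facts
  have hker : ∀ x : R, Φ x = 0 → x ∈ a + m ^ (r' + 1) := fun x hx => hsub hx
  have ham : a ≤ m := by
    rw [ha, Ideal.span_le]
    rintro _ ⟨i, rfl⟩
    exact hym i
  have hkerm : ∀ x : R, Φ x = 0 → x ∈ m := by
    intro x hx
    have h1 := hker x hx
    rw [Submodule.add_eq_sup] at h1
    exact (sup_le ham (Ideal.pow_le_self (by omega))) h1
  have hgen2 : ∀ x : R, Φ x = 0 → x ∈ a + m ^ 2 := by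
    intro x hx
    obtain ⟨c, hc⟩ := hgen x hx (hkerm x hx)
    rw [Submodule.add_eq_sup]
    have h1 : ∑ i, c i * y i ∈ a := by
      rw [ha]
      exact Ideal.sum_mem _ fun i _ => Ideal.mul_mem_left _ _ (Ideal.subset_span ⟨i, rfl⟩)
    have h2 := Submodule.add_mem_sup h1 hc
    simpa using h2
  -- automorphisms preserve powers of m
  have hmpow : ∀ (t : ℕ) (γ : Γ) (x : R), x ∈ m ^ t → ρ γ x ∈ m ^ t := by
    intro t
    induction t with
    | zero => intro γ x _; simp [Ideal.one_eq_top]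
    | succ t ih =>
      intro γ x hx
      rw [pow_succ] at hx ⊢
      refine Submodule.mul_induction_on (C := fun z => ρ γ z ∈ m ^ t * m) hx ?_ ?_
      · intro p hp q hq
        rw [map_mul]
        exact Ideal.mul_mem_mul (ih γ p hp) (hloc γ q hq)
      · intro u v hu hv
        rw [map_add]
        exact add_mem hu hv
  -- absorption lemmas
  have habsorb : ∀ u v : R, u ∈ a + m ^ (r' + 1) → v ∈ m →
      u * v ∈ a + m ^ (r' + 1 + 1) := by
    intro u v hu hv
    rw [Submodule.add_eq_sup] at hu ⊢
    obtain ⟨p, hp, q, hq, rfl⟩ := Submodule.mem_sup.mp hu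
    rw [add_mul]
    refine Submodule.add_mem _ (Submodule.mem_sup_left (Ideal.mul_mem_right _ _ hp))
      (Submodule.mem_sup_right ?_)
    rw [pow_succ]
    exact Ideal.mul_mem_mul hq hv
  have habsorb2 : ∀ u v : R, u ∈ m ^ r' → v ∈ a + m ^ 2 →
      u * v ∈ a + m ^ (r' + 1 + 1) := by
    intro u v hu hv
    rw [Submodule.add_eq_sup] at hv ⊢
    obtain ⟨p, hp, q, hq, rfl⟩ := Submodule.mem_sup.mp hv
    rw [mul_add]
    refine Submodule.add_mem _ (Submodule.mem_sup_left (Ideal.mul_mem_left _ _ hp))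
      (Submodule.mem_sup_right ?_)
    have h2 : m ^ (r' + 1 + 1) = m ^ r' * m ^ 2 := by
      rw [← pow_add]
    rw [h2]
    exact Ideal.mul_mem_mul hu hq
  have hsmulM : ∀ (c : k) (x : R), x ∈ a + m ^ (r' + 1 + 1) →
      c • x ∈ a + m ^ (r' + 1 + 1) := by
    intro c x hx
    rw [Algebra.smul_def]
    exact Ideal.mul_mem_left _ _ hx
  -- the key identity
  have hid : ∀ p b : R, p * b - Φ (p * b) =
      (p - Φ p) * b - n⁻¹ • ∑ γ : Γ, ρ γ p * (ρ γ b - b) := by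
    intro p b
    have e1 : ∑ γ : Γ, ρ γ (p * b) = (∑ γ : Γ, ρ γ p * b) + ∑ γ : Γ, ρ γ p * (ρ γ b - b) := by
      rw [← Finset.sum_add_distrib]
      refine Finset.sum_congr rfl fun γ _ => ?_
      rw [map_mul]; ring
    rw [hΦ (p * b), hΦ p, e1, smul_add, sub_mul, smul_mul_assoc, Finset.sum_mul,
      sub_add_eq_sub_sub]
  -- lemma L : z ∈ m^r implies z - Φ z ∈ a + m^(r+1)
  have hL : ∀ z ∈ m ^ (r' + 1), z - Φ z ∈ a + m ^ (r' + 1 + 1) := by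
    intro z hz
    rw [pow_succ] at hz
    refine Submodule.mul_induction_on
      (C := fun w => w - Φ w ∈ a + m ^ (r' + 1 + 1)) hz ?_ ?_
    · intro p hp b hb
      rw [hid p b]
      refine Submodule.sub_mem _ ?_ ?_
      · exact habsorb _ _ (hker _ (by rw [hΦsub, hidem, sub_self])) hb
      · refine hsmulM _ _ (Submodule.sum_mem _ fun γ _ => ?_)
        refine habsorb2 _ _ (hmpow r' γ p hp) (hgen2 _ ?_)
        rw [hΦsub, hΦγ, sub_self]
    · intro u v hu hv
      have h : u + v - Φ (u + v) = (u - Φ u) + (v - Φ v) := by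
        rw [hΦadd]; ring
      rw [h]
      exact Submodule.add_mem _ hu hv
  -- main argument
  intro x hx
  have hx0 : Φ x = 0 := hx
  have h1 := hker x hx0
  rw [Submodule.add_eq_sup] at h1
  obtain ⟨u, hu, z, hz, hxe⟩ := Submodule.mem_sup.mp h1
  rw [ha] at hu
  obtain ⟨c, hc⟩ := (Submodule.mem_span_range_iff_exists_fun R).mp hu
  set P : R := ∑ i, Φ (c i) * y i with hP
  set G : R := ∑ i, (c i - Φ (c i)) * y i with hG
  have hPG : P + G = ∑ i, c i • y i := by
    rw [hP, hG, ← Finset.sum_add_distrib]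
    refine Finset.sum_congr rfl fun i _ => ?_
    rw [smul_eq_mul]; ring
  have hdecomp : x = P + (G + z) := by
    rw [← add_assoc, hPG, hc, hxe]
  have hPk : Φ P = 0 := by
    rw [hP, hΦsum]
    refine Finset.sum_eq_zero fun i _ => ?_
    rw [hΦinvmul _ _ (fun γ => hinv γ (c i)), hyker, mul_zero]
  have hGdiff : G - Φ G ∈ a + m ^ (r' + 1 + 1) := by
    rw [hG, hΦsum, ← Finset.sum_sub_distrib]
    refine Submodule.sum_mem _ fun i _ => ?_
    have hg0 : Φ (c i - Φ (c i)) = 0 := by rw [hΦsub, hidem, sub_self]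
    rw [hid]
    refine Submodule.sub_mem _ ?_ ?_
    · refine habsorb _ _ ?_ (hym i)
      rw [hg0, sub_zero]
      exact hker _ hg0
    · refine hsmulM _ _ (Submodule.sum_mem _ fun γ _ => ?_)
      rw [mul_comm]
      refine habsorb _ _ (hker _ ?_) (hloc γ _ (hkerm _ hg0))
      rw [hΦsub, hΦγ, sub_self]
  have hzdiff : z - Φ z ∈ a + m ^ (r' + 1 + 1) := hL z hz
  have hPmem : P ∈ a + m ^ (r' + 1 + 1) := by
    rw [Submodule.add_eq_sup]
    refine Submodule.mem_sup_left ?_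
    rw [hP, ha]
    exact Ideal.sum_mem _ fun i _ => Ideal.mul_mem_left _ _ (Ideal.subset_span ⟨i, rfl⟩)
  have hGz : Φ (G + z) = 0 := by
    have h := hΦadd P (G + z)
    rw [← hdecomp, hx0, hPk, zero_add] at h
    exact h.symm
  have hsum : x = P + (G - Φ G) + (z - Φ z) := by
    have h2 : Φ G + Φ z = 0 := by rw [← hΦadd]; exact hGz
    rw [hdecomp]
    linear_combination h2
  show x ∈ a + m ^ (r' + 1 + 1)
  rw [hsum]
  exact Submodule.add_mem _ (Submodule.add_mem _ hPmem hGdiff) hzdiff
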